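/- For 0 < q < 1, the Caputo fractional derivative with lower terminal 0 of a non-constant continuously differentiable T-periodic function f : [0,∞) → ℝ is not T-periodic. -/

import Mathlib

open MeasureTheory Real Filter

/-- Caputo fractional derivative of order `q` with starting point `0`. -/
noncomputable def caputo (q : ℝ) (f : ℝ → ℝ) (t : ℝ) : ℝ :=
  (1 / Real.Gamma (1 - q)) * ∫ τ in (0:ℝ)..t, (t - τ) ^ (-q) * deriv f τ

/-- Two-parameter Mittag-Leffler function (real arguments). -/
noncomputable def ML (a b z : ℝ) : ℝ :=
  ∑' k : ℕ, z ^ k / Real.Gamma (a * k + b)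


noncomputable def binC (q : ℝ) (k : ℕ) : ℝ :=
  (∏ j ∈ Finset.range k, (q + j)) / (k.factorial : ℝ)

lemma binC_zero (q : ℝ) : binC q 0 = 1 := by simp [binC]

lemma binC_pos {q : ℝ} (hq : 0 < q) (k : ℕ) : 0 < binC q k := by
  apply div_pos
  · exact Finset.prod_pos fun j _ => by positivity
  · exact_mod_cast k.factorial_pos

lemma binC_succ_mul (q : ℝ) (k : ℕ) :
    binC q (k + 1) * (k + 1) = q * binC (q + 1) k := by
  have h1 : (∏ j ∈ Finset.range (k+1), (q + j)) =
      (∏ j ∈ Finset.range k, ((q+1) + j)) * q := by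
    rw [Finset.prod_range_succ']
    congr 1
    · exact Finset.prod_congr rfl fun j _ => by push_cast; ring
    · simp
  have h2 : ((k+1).factorial : ℝ) = (k.factorial : ℝ) * (k+1) := by
    rw [Nat.factorial_succ]; push_cast; ring
  have hk : ((k:ℝ)+1) ≠ 0 := by positivity
  have hf : (k.factorial : ℝ) ≠ 0 := by exact_mod_cast k.factorial_ne_zero
  simp only [binC]
  rw [h1, h2, ← div_div, div_mul_cancel₀ _ hk]
  ring

lemma taylor_bound : ∀ (n : ℕ) (q : ℝ), 0 < q → ∃ C : ℝ, 0 ≤ C ∧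
    ∀ w ∈ Set.Icc (0:ℝ) (1/2),
      |(1 - w) ^ (-q) - ∑ k ∈ Finset.range n, binC q k * w ^ k| ≤ C * w ^ n := by
  intro n
  induction n with
  | zero =>
    intro q hq
    refine ⟨2 ^ q, by positivity, fun w hw => ?_⟩
    obtain ⟨hw0, hw1⟩ := hw
    simp only [Finset.range_zero, Finset.sum_empty, sub_zero, pow_zero, mul_one]
    rw [abs_of_nonneg (rpow_nonneg (by linarith) _)]
    calc (1 - w) ^ (-q) ≤ (1/2 : ℝ) ^ (-q) :=
          rpow_le_rpow_of_nonpos (by norm_num) (by linarith) (by linarith)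
      _ = 2 ^ q := by
          rw [one_div, Real.inv_rpow (by norm_num), Real.rpow_neg (by norm_num), inv_inv]
  | succ n ih =>
    intro q hq
    obtain ⟨C, hC0, hC⟩ := ih (q + 1) (by linarith)
    refine ⟨q * C, by positivity, fun w hw => ?_⟩
    obtain ⟨hw0, hw1⟩ := hw
    set φ : ℝ → ℝ := fun w => (1 - w) ^ (-q) - ∑ k ∈ Finset.range (n+1), binC q k * w ^ k with hφ
    set ψ : ℝ → ℝ := fun s => q * ((1 - s) ^ (-(q+1)) - ∑ k ∈ Finset.range n, binC (q+1) k * s ^ k) with hψ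
    -- derivative of φ is ψ on [0, 1/2]
    have hder : ∀ s ∈ Set.uIcc (0:ℝ) w, HasDerivAt φ (ψ s) s := by
      intro s hs
      rw [Set.uIcc_of_le hw0] at hs
      have hs1 : (1:ℝ) - s ≠ 0 := by
        have : s ≤ 1/2 := le_trans hs.2 hw1
        intro h; nlinarith [hs.1]
      have h1 : HasDerivAt (fun u : ℝ => (1 - u) ^ (-q)) (q * (1 - s) ^ (-(q+1))) s := by
        have hinner : HasDerivAt (fun u : ℝ => 1 - u) (-1) s := by
          simpa using (hasDerivAt_id s).const_sub 1
        have houter := Real.hasDerivAt_rpow_const (p := -q) (Or.inl hs1)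
        have := (houter.comp s hinner)
        refine this.congr_deriv ?_
        have : -q - 1 = -(q+1) := by ring
        rw [this]; ring
      have h2 : HasDerivAt (fun u : ℝ => ∑ k ∈ Finset.range (n+1), binC q k * u ^ k)
          (∑ k ∈ Finset.range (n+1), binC q k * (k * s ^ (k-1))) s := by
        apply HasDerivAt.fun_sum
        intro k _
        exact (hasDerivAt_pow k s).const_mul (binC q k)
      have hsum : (∑ k ∈ Finset.range (n+1), binC q k * (k * s ^ (k-1)))
          = q * ∑ k ∈ Finset.range n, binC (q+1) k * s ^ k := by
        rw [Finset.sum_range_succ']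
        simp only [Nat.cast_zero, zero_mul, mul_zero, add_zero]
        rw [Finset.mul_sum]
        apply Finset.sum_congr rfl
        intro k _
        have : binC q (k+1) * ((k+1 : ℕ) * s ^ (k+1-1)) = (binC q (k+1) * (k+1)) * s ^ k := by
          push_cast; ring
        rw [this, binC_succ_mul]
        ring
      have := h1.sub h2
      rw [hsum] at this
      refine this.congr_deriv ?_
      simp only [hψ]; ring
    -- ψ is interval integrable (continuous on [0,w])
    have hcont : ContinuousOn ψ (Set.uIcc (0:ℝ) w) := by
      rw [Set.uIcc_of_le hw0]
      apply ContinuousOn.mul continuousOn_const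
      apply ContinuousOn.sub
      · apply ContinuousOn.rpow_const (continuousOn_const.sub continuousOn_id)
        intro s hs
        left
        have : s ≤ 1/2 := le_trans hs.2 hw1
        intro h; simp only [Pi.sub_apply, id_eq] at h; nlinarith [hs.1]
      · exact Continuous.continuousOn (by fun_prop)
    have hint : IntervalIntegrable ψ volume 0 w := hcont.intervalIntegrable
    have hftc := intervalIntegral.integral_eq_sub_of_hasDerivAt hder hint
    have hφ0 : φ 0 = 0 := by
      have hs0 : ∑ k ∈ Finset.range (n+1), binC q k * (0:ℝ)^k = binC q 0 * 0 ^ 0 :=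
        Finset.sum_eq_single_of_mem 0 (Finset.mem_range.2 (Nat.succ_pos n))
          (fun k _ hk => by simp [zero_pow hk])
      simp [hφ, hs0, binC_zero]
    have hbound : ∀ s ∈ Set.uIoc (0:ℝ) w, ‖ψ s‖ ≤ q * C * s ^ n := by
      intro s hs
      rw [Set.uIoc_of_le hw0] at hs
      have h1 := hC s ⟨le_of_lt hs.1, le_trans hs.2 hw1⟩
      have h2 : ‖ψ s‖ = q * |(1-s) ^ (-(q+1)) - ∑ k ∈ Finset.range n, binC (q+1) k * s ^ k| := by
        simp only [hψ, Real.norm_eq_abs, abs_mul, abs_of_pos hq]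
      rw [h2, mul_assoc]
      exact mul_le_mul_of_nonneg_left h1 (le_of_lt hq)
    have hval : ∫ s in (0:ℝ)..w, q * C * s ^ n = q * C * (w ^ (n+1) / (n+1)) := by
      rw [intervalIntegral.integral_const_mul, integral_pow]
      norm_num
    have h1 : φ w = ∫ s in (0:ℝ)..w, ψ s := by rw [hftc, hφ0, sub_zero]
    show |φ w| ≤ q * C * w ^ (n+1)
    rw [h1, ← Real.norm_eq_abs]
    refine le_trans (intervalIntegral.norm_integral_le_of_norm_le (g := fun s => q * C * s ^ n) hw0 ?_ ?_) ?_
    · exact Eventually.of_forall (fun s hs => hbound s (by rw [Set.uIoc_of_le hw0]; exact hs))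
    · exact Continuous.intervalIntegrable (by fun_prop) ..
    · rw [hval]
      have hwp : (0:ℝ) ≤ w ^ (n+1) := by positivity
      have hdiv : w ^ (n+1) / (n+1) ≤ w ^ (n+1) := by
        apply div_le_self hwp
        have : (0:ℝ) ≤ (n:ℝ) := Nat.cast_nonneg n
        push_cast; linarith
      have := mul_le_mul_of_nonneg_left hdiv (mul_nonneg (le_of_lt hq) hC0)
      linarith [this]

lemma moments_zero {q T : ℝ} (hq : 0 < q) (hT : 0 < T) {g : ℝ → ℝ} (hg : Continuous g)
    (H : ∀ x : ℝ, 2*T ≤ x → ∫ τ in (0:ℝ)..T, (x - τ) ^ (-q) * g τ = 0) :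
    ∀ n : ℕ, ∫ τ in (0:ℝ)..T, τ ^ n * g τ = 0 := by
  intro n
  induction n using Nat.strong_induction_on with
  | _ n ih =>
  obtain ⟨C, hC0, hC⟩ := taylor_bound (n+1) q hq
  obtain ⟨B, hB⟩ := (isCompact_Icc (a := (0:ℝ)) (b := T)).exists_bound_of_continuousOn
    hg.continuousOn
  have hB0 : 0 ≤ B := le_trans (norm_nonneg _) (hB 0 ⟨le_refl _, le_of_lt hT⟩)
  set M : ℕ → ℝ := fun k => ∫ τ in (0:ℝ)..T, τ ^ k * g τ with hM
  set c : ℝ := binC q n * M n with hc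
  have key : ∀ x : ℝ, 2*T ≤ x → |c| ≤ (C * T^(n+2) * B) * (1/x) := by
    intro x hx
    have hxpos : (0:ℝ) < x := lt_of_lt_of_le (by linarith) hx
    have hxn : (0:ℝ) < x ^ n := pow_pos hxpos n
    have hbase : ∀ τ ∈ Set.Icc (0:ℝ) T, τ/x ∈ Set.Icc (0:ℝ) (1/2) := by
      intro τ hτ
      constructor
      · exact div_nonneg hτ.1 hxpos.le
      · have h1 : τ/x ≤ T/x := by
          gcongr
          exact hτ.2
        have h2 : T/x ≤ 1/2 := by rw [div_le_iff₀ hxpos]; linarith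
        linarith
    have hbase' : ∀ τ ∈ Set.Icc (0:ℝ) T, (1:ℝ)/2 ≤ 1 - τ/x := by
      intro τ hτ
      have := (hbase τ hτ).2
      linarith
    -- continuity of integrands
    have cont1 : ContinuousOn (fun τ => (1 - τ/x) ^ (-q) * g τ) (Set.uIcc (0:ℝ) T) := by
      rw [Set.uIcc_of_le hT.le]
      apply ContinuousOn.mul _ hg.continuousOn
      apply ContinuousOn.rpow_const (Continuous.continuousOn (by fun_prop))
      intro τ hτ
      left
      have := hbase' τ hτ
      intro h0; rw [h0] at this; norm_num at this
    have i1 : IntervalIntegrable (fun τ => (1 - τ/x) ^ (-q) * g τ) volume 0 T :=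
      cont1.intervalIntegrable
    have iP : ∀ k : ℕ, IntervalIntegrable (fun τ => binC q k * (τ/x)^k * g τ) volume 0 T := by
      intro k
      exact Continuous.intervalIntegrable (by fun_prop) ..
    -- A = 0
    have hA : ∫ τ in (0:ℝ)..T, (1 - τ/x) ^ (-q) * g τ = 0 := by
      have h0 := H x hx
      have heq : ∫ τ in (0:ℝ)..T, (1 - τ/x) ^ (-q) * g τ
          = ∫ τ in (0:ℝ)..T, x ^ q * ((x - τ) ^ (-q) * g τ) := by
        apply intervalIntegral.integral_congr
        intro τ hτ
        rw [Set.uIcc_of_le hT.le] at hτ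
        show (1 - τ/x) ^ (-q) * g τ = x ^ q * ((x - τ) ^ (-q) * g τ)
        have h1τ : (0:ℝ) ≤ 1 - τ/x := le_trans (by norm_num) (hbase' τ hτ)
        have hxt : x - τ = x * (1 - τ/x) := by field_simp
        rw [hxt, Real.mul_rpow hxpos.le h1τ, ← mul_assoc, ← mul_assoc,
          ← Real.rpow_add hxpos]
        norm_num
      rw [heq, intervalIntegral.integral_const_mul, h0, mul_zero]
    -- split into polynomial part plus remainder
    have hPg : ∀ k : ℕ, ∫ τ in (0:ℝ)..T, binC q k * (τ/x)^k * g τ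
        = binC q k * (1/x)^k * M k := by
      intro k
      have heq : ∀ τ : ℝ, binC q k * (τ/x)^k * g τ
          = (binC q k * (1/x)^k) * (τ^k * g τ) := by
        intro τ; rw [div_pow, div_pow]; ring
      simp_rw [heq]
      rw [intervalIntegral.integral_const_mul]
    have hsplit : (∫ τ in (0:ℝ)..T,
          ((1 - τ/x) ^ (-q) - ∑ k ∈ Finset.range (n+1), binC q k * (τ/x)^k) * g τ)
        = (∫ τ in (0:ℝ)..T, (1 - τ/x) ^ (-q) * g τ)
          - ∑ k ∈ Finset.range (n+1), binC q k * (1/x)^k * M k := by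
      have heq : ∀ τ : ℝ, ((1 - τ/x) ^ (-q) - ∑ k ∈ Finset.range (n+1), binC q k * (τ/x)^k) * g τ
          = (1 - τ/x) ^ (-q) * g τ - ∑ k ∈ Finset.range (n+1), binC q k * (τ/x)^k * g τ := by
        intro τ; rw [sub_mul, Finset.sum_mul]
      simp_rw [heq]
      have iPsum : IntervalIntegrable
          (fun τ => ∑ k ∈ Finset.range (n+1), binC q k * (τ/x)^k * g τ) volume 0 T := by
        apply Continuous.intervalIntegrable
        apply continuous_finset_sum
        intro k _
        fun_prop
      rw [intervalIntegral.integral_sub i1 iPsum,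
        intervalIntegral.integral_finset_sum (fun k _ => iP k)]
      congr 1
      exact Finset.sum_congr rfl fun k _ => hPg k
    -- the polynomial part reduces to the n-th term
    have hsum : ∑ k ∈ Finset.range (n+1), binC q k * (1/x)^k * M k = c * (1/x)^n := by
      rw [Finset.sum_range_succ]
      have : ∀ k ∈ Finset.range n, binC q k * (1/x)^k * M k = 0 := by
        intro k hk
        have : M k = 0 := ih k (Finset.mem_range.mp hk)
        rw [this, mul_zero]
      rw [Finset.sum_eq_zero this, zero_add, hc]
      ring
    -- bound the remainder integral
    have hrem : ‖∫ τ in (0:ℝ)..T,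
        ((1 - τ/x) ^ (-q) - ∑ k ∈ Finset.range (n+1), binC q k * (τ/x)^k) * g τ‖
        ≤ (C * (T/x)^(n+1) * B) * |T - 0| := by
      apply intervalIntegral.norm_integral_le_of_norm_le_const
      intro τ hτ
      rw [Set.uIoc_of_le hT.le] at hτ
      have hτIcc : τ ∈ Set.Icc (0:ℝ) T := ⟨hτ.1.le, hτ.2⟩
      have h1 := hC (τ/x) (hbase τ hτIcc)
      have h2 : (τ/x)^(n+1) ≤ (T/x)^(n+1) := by
        apply pow_le_pow_left₀ (div_nonneg hτ.1.le hxpos.le)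
        gcongr
        exact hτIcc.2
      have h3 : |g τ| ≤ B := hB τ hτIcc
      rw [Real.norm_eq_abs, abs_mul]
      have h4 : |(1 - τ/x) ^ (-q) - ∑ k ∈ Finset.range (n+1), binC q k * (τ/x)^k|
          ≤ C * (T/x)^(n+1) := le_trans h1 (mul_le_mul_of_nonneg_left h2 hC0)
      calc |(1 - τ/x) ^ (-q) - ∑ k ∈ Finset.range (n+1), binC q k * (τ/x)^k| * |g τ|
          ≤ (C * (T/x)^(n+1)) * B := by
            apply mul_le_mul h4 h3 (abs_nonneg _) (mul_nonneg hC0 (by positivity))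
        _ = C * (T/x)^(n+1) * B := by ring
    -- combine
    have hcx : c * (1/x)^n = - ∫ τ in (0:ℝ)..T,
        ((1 - τ/x) ^ (-q) - ∑ k ∈ Finset.range (n+1), binC q k * (τ/x)^k) * g τ := by
      rw [hsplit, hA, hsum]; ring
    have h5 : |c| * (1/x)^n ≤ (C * (T/x)^(n+1) * B) * T := by
      have : |c * (1/x)^n| = |c| * (1/x)^n := by
        rw [abs_mul, abs_of_nonneg (show (0:ℝ) ≤ (1/x)^n by positivity)]
      rw [← this, hcx, abs_neg, ← Real.norm_eq_abs]
      calc ‖_‖ ≤ (C * (T/x)^(n+1) * B) * |T - 0| := hrem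
        _ = (C * (T/x)^(n+1) * B) * T := by rw [sub_zero, abs_of_pos hT]
    calc |c| = (|c| * (1/x)^n) * x^n := by
          rw [one_div, inv_pow, mul_assoc, inv_mul_cancel₀ hxn.ne', mul_one]
      _ ≤ ((C * (T/x)^(n+1) * B) * T) * x^n := by
          apply mul_le_mul_of_nonneg_right h5 hxn.le
      _ = (C * T^(n+2) * B) * (1/x) := by
          rw [div_pow]
          field_simp
          ring
  -- conclude c = 0
  have hlim : Tendsto (fun x : ℝ => (C * T^(n+2) * B) * (1/x)) atTop (nhds 0) := by
    simpa using tendsto_inv_atTop_zero.const_mul (C * T^(n+2) * B)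
  have habs : |c| ≤ 0 := by
    apply ge_of_tendsto hlim
    filter_upwards [eventually_ge_atTop (2*T)] with x hx
    exact key x hx
  have hc0 : c = 0 := abs_eq_zero.mp (le_antisymm habs (abs_nonneg _))
  have := binC_pos hq n
  have : M n = 0 := by
    rcases mul_eq_zero.mp hc0 with h | h
    · exact absurd h (ne_of_gt this)
    · exact h
  exact this

lemma zero_of_moments {T : ℝ} (hT : 0 < T) {g : ℝ → ℝ} (hg : Continuous g)
    (hm : ∀ n : ℕ, ∫ τ in (0:ℝ)..T, τ ^ n * g τ = 0) :
    ∀ τ ∈ Set.Icc (0:ℝ) T, g τ = 0 := by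
  have hpoly : ∀ p : Polynomial ℝ, ∫ τ in (0:ℝ)..T, p.eval τ * g τ = 0 := by
    intro p
    have heq : ∀ τ : ℝ, p.eval τ * g τ
        = ∑ k ∈ Finset.range (p.natDegree+1), p.coeff k * (τ^k * g τ) := by
      intro τ
      rw [Polynomial.eval_eq_sum_range, Finset.sum_mul]
      exact Finset.sum_congr rfl fun k _ => by ring
    simp_rw [heq]
    rw [intervalIntegral.integral_finset_sum
      (fun k _ => Continuous.intervalIntegrable (by fun_prop) ..)]
    apply Finset.sum_eq_zero
    intro k _
    rw [intervalIntegral.integral_const_mul, hm k, mul_zero]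
  obtain ⟨B, hB⟩ := (isCompact_Icc (a := (0:ℝ)) (b := T)).exists_bound_of_continuousOn
    hg.continuousOn
  have hB0 : 0 ≤ B := le_trans (norm_nonneg _) (hB 0 ⟨le_refl _, hT.le⟩)
  set I := ∫ τ in (0:ℝ)..T, g τ * g τ with hIdef
  have hI0 : 0 ≤ I := intervalIntegral.integral_nonneg hT.le (fun u _ => mul_self_nonneg _)
  have hIle : ∀ ε : ℝ, 0 < ε → I ≤ ε := by
    intro ε hε
    have hBT : (0:ℝ) < (B+1) * T := by nlinarith
    set δ := ε / ((B+1) * T) with hδdef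
    have hδpos : 0 < δ := div_pos hε hBT
    obtain ⟨p, hp⟩ := exists_polynomial_near_of_continuousOn 0 T g hg.continuousOn δ hδpos
    have e : I = ∫ τ in (0:ℝ)..T, (g τ - p.eval τ) * g τ := by
      have heq : ∀ τ : ℝ, (g τ - p.eval τ) * g τ = g τ * g τ - p.eval τ * g τ :=
        fun τ => by ring
      simp_rw [heq]
      rw [intervalIntegral.integral_sub (Continuous.intervalIntegrable (u := fun τ => g τ * g τ) (by fun_prop) ..)
        (Continuous.intervalIntegrable (u := fun τ => p.eval τ * g τ) (p.continuous.mul hg) ..), hpoly p, sub_zero]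
    have habs : |∫ τ in (0:ℝ)..T, (g τ - p.eval τ) * g τ| ≤ δ * (B+1) * |T - 0| := by
      rw [← Real.norm_eq_abs]
      apply intervalIntegral.norm_integral_le_of_norm_le_const
      intro τ hτ
      rw [Set.uIoc_of_le hT.le] at hτ
      have hτIcc : τ ∈ Set.Icc (0:ℝ) T := ⟨hτ.1.le, hτ.2⟩
      have h1 : |g τ - p.eval τ| ≤ δ := by
        rw [abs_sub_comm]
        exact (hp τ hτIcc).le
      have h2 : |g τ| ≤ B + 1 := le_trans (hB τ hτIcc) (by linarith)
      rw [Real.norm_eq_abs, abs_mul]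
      exact mul_le_mul h1 h2 (abs_nonneg _) hδpos.le
    calc I ≤ |I| := le_abs_self I
      _ = |∫ τ in (0:ℝ)..T, (g τ - p.eval τ) * g τ| := by rw [e]
      _ ≤ δ * (B+1) * |T - 0| := habs
      _ = ε := by
          rw [sub_zero, abs_of_pos hT, hδdef]
          field_simp
  have hIz : I = 0 := le_antisymm (by
    have : I ≤ 0 + (0:ℝ) → True := fun _ => trivial
    by_contra hcon
    push_neg at hcon
    exact absurd (hIle (I/2) (by linarith)) (by push_neg; linarith)) hI0
  -- now pointwise
  intro τ0 hτ0
  by_contra hne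
  set h : ℝ → ℝ := fun u => g u * g u with hh
  have hhc : Continuous h := hg.mul hg
  have hpos : 0 < h τ0 := by
    have := mul_self_nonneg (g τ0)
    rcases lt_or_eq_of_le this with h1 | h1
    · exact h1
    · exfalso; exact hne (by nlinarith [h1.symm])
  have hmem : h ⁻¹' Set.Ioi (h τ0 / 2) ∈ nhds τ0 :=
    hhc.continuousAt.preimage_mem_nhds (Ioi_mem_nhds (by linarith))
  obtain ⟨δ, hδpos, hδball⟩ := Metric.mem_nhds_iff.mp hmem
  set a := max (τ0 - δ/2) 0 with hadef
  set b := min (τ0 + δ/2) T with hbdef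
  have ha0 : 0 ≤ a := le_max_right _ _
  have hbT : b ≤ T := min_le_right _ _
  have hab : a < b := by
    have h1 : τ0 - δ/2 < τ0 + δ/2 := by linarith
    have h2 : τ0 - δ/2 < T := by linarith [hτ0.2]
    have h3 : (0:ℝ) < τ0 + δ/2 := by linarith [hτ0.1]
    exact lt_min (max_lt h1 h3) (max_lt h2 hT)
  have hsub : ∀ s ∈ Set.Ioo a b, h τ0 / 2 < h s := by
    intro s hs
    apply hδball
    simp only [Metric.mem_ball, Real.dist_eq]
    have h1 : τ0 - δ/2 ≤ a := le_max_left _ _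
    have h2 : b ≤ τ0 + δ/2 := min_le_left _ _
    rw [abs_lt]
    constructor <;> [linarith [hs.1]; linarith [hs.2]]
  have hint : ∀ u v : ℝ, IntervalIntegrable h volume u v :=
    fun u v => Continuous.intervalIntegrable hhc ..
  have hposint : 0 < ∫ s in a..b, h s := by
    apply intervalIntegral.intervalIntegral_pos_of_pos_on (hint a b) _ hab
    intro s hs
    exact lt_trans (by linarith) (hsub s hs)
  have e1 := intervalIntegral.integral_add_adjacent_intervals (hint 0 a) (hint a b)
  have e2 := intervalIntegral.integral_add_adjacent_intervals (hint 0 b) (hint b T)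
  have n1 : 0 ≤ ∫ s in (0:ℝ)..a, h s :=
    intervalIntegral.integral_nonneg ha0 (fun u _ => mul_self_nonneg _)
  have n2 : 0 ≤ ∫ s in b..T, h s :=
    intervalIntegral.integral_nonneg hbT (fun u _ => mul_self_nonneg _)
  have : I = (∫ s in (0:ℝ)..a, h s) + (∫ s in a..b, h s) + (∫ s in b..T, h s) := by
    rw [hIdef]
    have : (∫ τ in (0:ℝ)..T, g τ * g τ) = ∫ s in (0:ℝ)..T, h s := rfl
    rw [this, ← e2, ← e1]
  rw [hIz] at this
  linarith

theorem caputo_of_periodic_not_periodic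
    (q T : ℝ) (hq0 : 0 < q) (hq1 : q < 1) (hT : 0 < T)
    (f : ℝ → ℝ) (hf : ContDiff ℝ 1 f)
    (hper : ∀ t : ℝ, 0 ≤ t → f (t + T) = f t)
    (hnc : ∃ s t : ℝ, 0 ≤ s ∧ 0 ≤ t ∧ f s ≠ f t) :
    ¬ (∀ t : ℝ, 0 ≤ t → caputo q f (t + T) = caputo q f t) := by
  intro hP
  set g : ℝ → ℝ := deriv f with hgdef
  have hgc : Continuous g := hf.continuous_deriv le_rfl
  have hfd : Differentiable ℝ f := hf.differentiable one_ne_zero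
  have hgper : ∀ s : ℝ, 0 < s → g (s + T) = g s := by
    intro s hs
    have hev : (fun u => f (u + T)) =ᶠ[nhds s] f := by
      filter_upwards [Ioi_mem_nhds hs] with u hu
      exact hper u (le_of_lt hu)
    have h1 : deriv (fun u => f (u + T)) s = deriv f s := hev.deriv_eq
    rw [deriv_comp_add_const] at h1
    exact h1
  have hGpos : (0:ℝ) < Real.Gamma (1 - q) := Real.Gamma_pos_of_pos (by linarith)
  have hGamma : (1:ℝ) / Real.Gamma (1 - q) ≠ 0 := one_div_ne_zero (ne_of_gt hGpos)
  have hInt : ∀ t a b : ℝ, IntervalIntegrable (fun τ => (t - τ) ^ (-q) * g τ) volume a b := by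
    intro t a b
    apply IntervalIntegrable.mul_continuousOn _ hgc.continuousOn
    have h1 : IntervalIntegrable (fun x : ℝ => x ^ (-q)) volume (t - b) (t - a) :=
      intervalIntegral.intervalIntegrable_rpow' (by linarith)
    have h2 := h1.comp_sub_left t
    simpa using h2.symm
  have key : ∀ x : ℝ, 2*T ≤ x → ∫ τ in (0:ℝ)..T, (x - τ) ^ (-q) * g τ = 0 := by
    intro x hx
    set t := x - T with ht
    have ht0 : 0 ≤ t := by simp only [ht]; linarith
    have htT : x = t + T := by ring
    have hsplitI : ∫ τ in (0:ℝ)..(t+T), (t + T - τ) ^ (-q) * g τ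
        = (∫ τ in (0:ℝ)..T, (t + T - τ) ^ (-q) * g τ)
          + ∫ τ in T..(t+T), (t + T - τ) ^ (-q) * g τ :=
      (intervalIntegral.integral_add_adjacent_intervals (hInt (t+T) 0 T)
        (hInt (t+T) T (t+T))).symm
    have hshift : ∫ τ in T..(t+T), (t + T - τ) ^ (-q) * g τ
        = ∫ s in (0:ℝ)..t, (t - s) ^ (-q) * g (s + T) := by
      have h3 := intervalIntegral.integral_comp_add_right (a := 0) (b := t)
        (fun τ => (t + T - τ) ^ (-q) * g τ) T
      rw [zero_add] at h3
      rw [← h3]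
      apply intervalIntegral.integral_congr
      intro s _
      show (t + T - (s + T)) ^ (-q) * g (s + T) = (t - s) ^ (-q) * g (s + T)
      have h4 : t + T - (s + T) = t - s := by ring
      rw [h4]
    have hcongr : ∫ s in (0:ℝ)..t, (t - s) ^ (-q) * g (s + T)
        = ∫ s in (0:ℝ)..t, (t - s) ^ (-q) * g s := by
      apply intervalIntegral.integral_congr_ae
      apply ae_of_all
      intro s hs
      rw [Set.uIoc_of_le ht0] at hs
      rw [hgper s hs.1]
    have hcap := hP t ht0
    unfold caputo at hcap
    rw [← hgdef] at hcap
    have hmain : ∫ τ in (0:ℝ)..(t+T), (t + T - τ) ^ (-q) * g τ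
        = ∫ τ in (0:ℝ)..t, (t - τ) ^ (-q) * g τ :=
      mul_left_cancel₀ hGamma hcap
    rw [htT]
    have := hsplitI
    rw [hmain, hshift, hcongr] at this
    linarith
  have hmom := moments_zero hq0 hT hgc key
  have hg0 : ∀ τ ∈ Set.Icc (0:ℝ) T, g τ = 0 := zero_of_moments hT hgc hmom
  have hconst : ∀ u ∈ Set.Icc (0:ℝ) T, f u = f 0 := by
    intro u hu
    have hbound := norm_image_sub_le_of_norm_deriv_le_segment' (f' := g) (C := 0)
      (fun x _ => (hfd x).hasDerivAt.hasDerivWithinAt)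
      (fun x hx => le_of_eq (by rw [hg0 x ⟨hx.1, hx.2.le⟩]; simp)) u hu
    rw [zero_mul] at hbound
    have := norm_le_zero_iff.mp hbound
    rw [sub_eq_zero] at this
    exact this
  have hall : ∀ n : ℕ, ∀ u : ℝ, 0 ≤ u → u ≤ n * T → f u = f 0 := by
    intro n
    induction n with
    | zero =>
      intro u hu hun
      simp only [Nat.cast_zero, zero_mul] at hun
      have : u = 0 := le_antisymm hun hu
      rw [this]
    | succ n ihn =>
      intro u hu hun
      by_cases h2 : u ≤ T
      · exact hconst u ⟨hu, h2⟩
      · push_neg at h2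
        have h3 : u - T + T = u := by ring
        have h4 : f u = f (u - T) := by
          have h5 := hper (u - T) (by linarith : (0:ℝ) ≤ u - T)
          rw [h3] at h5
          exact h5
        rw [h4]
        apply ihn (u - T) (by linarith)
        push_cast at hun ⊢
        linarith
  obtain ⟨s, t, hs, ht, hne⟩ := hnc
  apply hne
  obtain ⟨n, hn⟩ := exists_nat_ge (s / T)
  obtain ⟨m, hm⟩ := exists_nat_ge (t / T)
  rw [hall n s hs ((div_le_iff₀ hT).mp hn), hall m t ht ((div_le_iff₀ hT).mp hm)]
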